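/- Let λ be a nonzero real number and let t be a real number with 1 + λt > 0 and (1/λ)·log(1 + λt) < 1. Then ∫₀¹ ∫₀^∞ e^{−x(1 − (u/λ)·log(1+λt))} dx du = log( 1 / (1 − (1/λ)·log(1+λt)) ) / ( (1/λ)·log(1+λt) ), provided (1/λ)·log(1+λt) ≠ 0. Equivalently, if U is a uniform random variable on (0,1) and X is an independent exponential random variable with parameter 1, then E[e_λ^{UX}(t)] = log( 1 / (1 − (1/λ)·log(1+λt)) ) / ( (1/λ)·log(1+λt) ). -/

import Mathlib

open MeasureTheory Real

lemma exp_neg_mul_integral (b : ℝ) (hb : 0 < b) :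
    ∫ x in Set.Ioi (0 : ℝ), Real.exp (-x * b) = b⁻¹ := by
  have := integral_rpow_mul_exp_neg_mul_Ioi (a := 1) (r := b) one_pos hb
  simp only [sub_self, Real.rpow_zero, one_mul, Real.Gamma_one, mul_one, one_div, pow_one] at this
  rw [Real.rpow_one] at this
  rw [← this]
  refine setIntegral_congr_fun measurableSet_Ioi (fun x hx => ?_)
  ring_nf

lemma one_div_integral (c : ℝ) (hc : c < 1) (hc0 : c ≠ 0) :
    ∫ u in (0:ℝ)..1, (1 - u * c)⁻¹ = -Real.log (1 - c) / c := by
  have key : ∀ u ∈ Set.uIcc (0:ℝ) 1, 0 < 1 - u * c := by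
    intro u hu
    rw [Set.uIcc_of_le zero_le_one] at hu
    rcases lt_or_ge c 0 with h | h
    · nlinarith [hu.1, hu.2]
    · nlinarith [hu.1, hu.2]
  have hderiv : ∀ u ∈ Set.uIcc (0:ℝ) 1,
      HasDerivAt (fun u => -Real.log (1 - u * c) / c) ((1 - u * c)⁻¹) u := by
    intro u hu
    have h1 : HasDerivAt (fun u : ℝ => 1 - u * c) (-c) u := by
      simpa using ((hasDerivAt_id u).mul_const c).const_sub 1
    have h2 := (h1.log (key u hu).ne')
    have h3 := (h2.neg.div_const c)
    refine h3.congr_deriv ?_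
    have hne := (key u hu).ne'
    field_simp
  have hcont : ContinuousOn (fun u : ℝ => (1 - u * c)⁻¹) (Set.uIcc 0 1) := by
    refine ContinuousOn.inv₀ (by fun_prop) fun u hu => (key u hu).ne'
  rw [intervalIntegral.integral_eq_sub_of_hasDerivAt hderiv
    (hcont.intervalIntegrable)]
  simp

theorem integral_deg_exp_uniform_exponential (lam t : ℝ) (hlam : lam ≠ 0)
    (h1 : 0 < 1 + lam * t) (h2 : (1 / lam) * Real.log (1 + lam * t) < 1)
    (h3 : (1 / lam) * Real.log (1 + lam * t) ≠ 0) :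
    ∫ u in Set.Ioo (0 : ℝ) 1, ∫ x in Set.Ioi (0 : ℝ),
        Real.exp (-x * (1 - (u / lam) * Real.log (1 + lam * t)))
      = Real.log (1 / (1 - (1 / lam) * Real.log (1 + lam * t))) /
          ((1 / lam) * Real.log (1 + lam * t)) := by
  set c := (1 / lam) * Real.log (1 + lam * t) with hc
  have hpos : ∀ u ∈ Set.Ioo (0:ℝ) 1, 0 < 1 - u * c := by
    intro u hu
    rcases lt_or_ge c 0 with h | h
    · nlinarith [hu.1, hu.2]
    · nlinarith [hu.1, hu.2]
  have step1 : ∫ u in Set.Ioo (0 : ℝ) 1, ∫ x in Set.Ioi (0 : ℝ),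
        Real.exp (-x * (1 - (u / lam) * Real.log (1 + lam * t)))
      = ∫ u in Set.Ioo (0:ℝ) 1, (1 - u * c)⁻¹ := by
    refine setIntegral_congr_fun measurableSet_Ioo (fun u hu => ?_)
    have huc : (u / lam) * Real.log (1 + lam * t) = u * c := by
      rw [hc]; field_simp
    rw [huc, exp_neg_mul_integral _ (hpos u hu)]
  rw [step1]
  have step2 : ∫ u in Set.Ioo (0:ℝ) 1, (1 - u * c)⁻¹
      = ∫ u in (0:ℝ)..1, (1 - u * c)⁻¹ := by
    rw [intervalIntegral.integral_of_le zero_le_one, integral_Ioc_eq_integral_Ioo]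
  rw [step2, one_div_integral c h2 h3]
  have h1c : 0 < 1 - c := by linarith
  rw [one_div, Real.log_inv]
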